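/- Let (X, ρ) be a metric space of negative type, i.e., for all n ∈ ℕ, c₁,…,c_n ∈ ℝ with Σ c_i = 0, and x₁,…,x_n ∈ X, one has Σ_{i,j} c_i c_j ρ(x_i, x_j) ≤ 0. Fix z₀ ∈ X and define k(x,y) = ρ(x,z₀) + ρ(y,z₀) - ρ(x,y). Then k is positive definite: for all n, all c₁,…,c_n ∈ ℝ (not necessarily summing to zero), and all x₁,…,x_n ∈ X, Σ_{i,j} c_i c_j k(x_i, x_j) ≥ 0. -/

import Mathlib

open scoped BigOperators

theorem stmt6 {X : Type*} [MetricSpace X]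
    (hneg : ∀ (n : ℕ) (c : Fin n → ℝ) (x : Fin n → X), (∑ i, c i) = 0 →
      ∑ i, ∑ j, c i * c j * dist (x i) (x j) ≤ 0)
    (z₀ : X) :
    ∀ (n : ℕ) (c : Fin n → ℝ) (x : Fin n → X),
      0 ≤ ∑ i, ∑ j, c i * c j *
        (dist (x i) z₀ + dist (x j) z₀ - dist (x i) (x j)) := by
  intro n c x
  set S := ∑ i, c i with hS
  have h := hneg (n+1) (Fin.snoc c (-S)) (Fin.snoc x z₀)
    (by simp [Fin.sum_univ_castSucc, hS])
  simp only [Fin.sum_univ_castSucc, Fin.snoc_castSucc, Fin.snoc_last,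
    dist_self, mul_zero] at h
  set T := ∑ i, c i * dist (x i) z₀ with hT
  set D := ∑ i, ∑ j, c i * c j * dist (x i) (x j) with hD
  have e0 : ∑ i, c i * -S * dist (x i) z₀ = -(S * T) := by
    have e : ∀ i ∈ Finset.univ, c i * -S * dist (x i) z₀
        = -(S * (c i * dist (x i) z₀)) := fun i _ => by ring
    rw [Finset.sum_congr rfl e, Finset.sum_neg_distrib, ← Finset.mul_sum, ← hT]
  have e2 : ∑ j, -S * c j * dist z₀ (x j) = -(S * T) := by
    have e : ∀ j ∈ Finset.univ, -S * c j * dist z₀ (x j)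
        = -(S * (c j * dist (x j) z₀)) := fun j _ => by rw [dist_comm]; ring
    rw [Finset.sum_congr rfl e, Finset.sum_neg_distrib, ← Finset.mul_sum, ← hT]
  have h2 : D - S * T - S * T ≤ 0 := by
    rw [Finset.sum_add_distrib, e0, e2, ← hD] at h
    linarith
  have f1 : ∑ i, ∑ j, c i * c j * dist (x i) z₀ = S * T := by
    rw [hS, hT, mul_comm, Finset.sum_mul_sum]
    exact Finset.sum_congr rfl (fun i _ => Finset.sum_congr rfl (fun j _ => by ring))
  have f2 : ∑ i, ∑ j, c i * c j * dist (x j) z₀ = S * T := by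
    rw [hS, hT, Finset.sum_mul_sum]
    exact Finset.sum_congr rfl (fun i _ => Finset.sum_congr rfl (fun j _ => by ring))
  have e3 : ∑ i, ∑ j, c i * c j *
        (dist (x i) z₀ + dist (x j) z₀ - dist (x i) (x j))
      = S * T + S * T - D := by
    simp only [mul_sub, mul_add, Finset.sum_add_distrib, Finset.sum_sub_distrib]
    rw [f1, f2, ← hD]
  rw [e3]; linarith
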